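/- For pairwise disjoint spectra generalized s-plateaued functions f_y (y ∈ (ZMod p)^s) on (ZMod p)^n, the Walsh supports S_{f_y} form a partition of (ZMod p)^n: they are pairwise disjoint, each has size p^{n−s}, and their union is (ZMod p)^n. -/

import Mathlib

open Complex Finset

noncomputable def zeta (m : ℕ) : ℂ := Complex.exp (2 * Real.pi * Complex.I / m)

def dot {p n : ℕ} (a x : Fin n → ZMod p) : ZMod p := ∑ i, a i * x i

noncomputable def walsh (p n k : ℕ) [Fact (Nat.Prime p)]
    (f : (Fin n → ZMod p) → ZMod (p ^ k)) (a : Fin n → ZMod p) : ℂ :=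
  ∑ x : Fin n → ZMod p, zeta (p ^ k) ^ (f x).val * zeta p ^ ((-(dot a x)).val)

section aux
variable (p : ℕ) [Fact (Nat.Prime p)]

lemma zeta_prim (m : ℕ) (hm : m ≠ 0) : IsPrimitiveRoot (zeta m) m :=
  Complex.isPrimitiveRoot_exp m hm

lemma zeta_pow (m : ℕ) (hm : m ≠ 0) : zeta m ^ m = 1 := (zeta_prim m hm).pow_eq_one

lemma zeta_ne_zero (m : ℕ) : zeta m ≠ 0 := Complex.exp_ne_zero _

lemma zeta_conj (m : ℕ) : (starRingEnd ℂ) (zeta m) = (zeta m)⁻¹ := by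
  rw [zeta, ← Complex.exp_conj, ← Complex.exp_neg]
  congr 1
  simp [map_div₀, Complex.conj_I, map_ofNat]
  ring

noncomputable def psi : AddChar (ZMod p) ℂ :=
  AddChar.zmodChar p (zeta_pow p (Fact.out (p := p.Prime)).ne_zero)

lemma psi_apply (t : ZMod p) : psi p t = zeta p ^ t.val := rfl

lemma psi_conj (t : ZMod p) : (starRingEnd ℂ) (psi p t) = psi p (-t) := by
  have h1 : psi p t * psi p (-t) = 1 := by
    rw [← AddChar.map_add_eq_mul, add_neg_cancel, AddChar.map_zero_eq_one]
  have h2 : psi p t * (starRingEnd ℂ) (psi p t) = 1 := by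
    rw [psi_apply, map_pow, zeta_conj, ← mul_pow, mul_inv_cancel₀, one_pow]
    exact Complex.exp_ne_zero _
  exact mul_left_cancel₀ (fun h => by simp [h] at h2) (h2.trans h1.symm)

lemma psi_eq_one_iff (t : ZMod p) : psi p t = 1 ↔ t = 0 := by
  constructor
  · intro h
    have hv := ZMod.val_lt t
    rw [psi_apply, ← pow_zero (zeta p)] at h
    exact (ZMod.val_eq_zero t).mp
      ((zeta_prim p (Fact.out (p := p.Prime)).ne_zero).pow_inj hv
        (Fact.out (p := p.Prime)).pos h)
  · rintro rfl; exact AddChar.map_zero_eq_one _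

variable (n : ℕ)

lemma dot_sub (a x x' : Fin n → ZMod p) : dot a x' - dot a x = dot a (x' - x) := by
  simp [dot, mul_sub, Finset.sum_sub_distrib]

/-- Orthogonality. -/
lemma sum_psi_dot (d : Fin n → ZMod p) :
    ∑ a : Fin n → ZMod p, psi p (dot a d) = if d = 0 then ((p : ℂ) ^ n) else 0 := by
  split_ifs with hd
  · subst hd
    simp only [dot, mul_zero, Pi.zero_apply, Finset.sum_const_zero,
      AddChar.map_zero_eq_one, Finset.sum_const, Finset.card_univ]
    simp [Fintype.card_fun, ZMod.card]
  · -- build additive character a ↦ psi (dot a d) and show it's nontrivial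
    have hAdd : ∀ a b : Fin n → ZMod p, dot (a + b) d = dot a d + dot b d := by
      intro a b; simp [dot, add_mul, Finset.sum_add_distrib]
    set φ : AddChar (Fin n → ZMod p) ℂ :=
      (psi p).compAddMonoidHom
        { toFun := fun a => dot a d,
          map_zero' := by simp [dot],
          map_add' := hAdd } with hφ
    have hφa : ∀ a, φ a = psi p (dot a d) := fun a => rfl
    obtain ⟨i, hi⟩ : ∃ i, d i ≠ 0 := by
      by_contra h; push_neg at h; exact hd (funext h)
    have hne : φ ≠ 1 := by
      rw [AddChar.ne_one_iff]
      refine ⟨Pi.single i 1, ?_⟩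
      rw [hφa]
      have : dot (Pi.single i 1) d = d i := by
        simp [dot, Pi.single_apply, Finset.sum_ite_eq']
      rw [this]
      intro h
      exact hi ((psi_eq_one_iff p (d i)).mp h)
    have := AddChar.sum_eq_zero_of_ne_one hne
    simpa only [hφa] using this

lemma walsh_eq (k : ℕ) (g : (Fin n → ZMod p) → ZMod (p ^ k)) (a : Fin n → ZMod p) :
    walsh p n k g a = ∑ x, zeta (p ^ k) ^ (g x).val * psi p (-(dot a x)) := rfl

lemma parseval (k : ℕ) (hk : 1 ≤ k) (g : (Fin n → ZMod p) → ZMod (p ^ k)) :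
    ∑ a : Fin n → ZMod p, (Complex.normSq (walsh p n k g a) : ℂ) = (p : ℂ) ^ (2 * n) := by
  have hpk : (p : ℕ) ^ k ≠ 0 := pow_ne_zero _ (Fact.out (p := p.Prime)).ne_zero
  set c : (Fin n → ZMod p) → ℂ := fun x => zeta (p ^ k) ^ (g x).val with hc
  have hcc : ∀ x, c x * (starRingEnd ℂ) (c x) = 1 := by
    intro x
    rw [hc]
    simp only [map_pow, zeta_conj, ← mul_pow]
    rw [mul_inv_cancel₀ (zeta_ne_zero _), one_pow]
  calc ∑ a : Fin n → ZMod p, (Complex.normSq (walsh p n k g a) : ℂ)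
      = ∑ a : Fin n → ZMod p, ∑ x, ∑ x',
          (c x * (starRingEnd ℂ) (c x')) * psi p (dot a (x' - x)) := by
        refine Finset.sum_congr rfl fun a _ => ?_
        rw [← Complex.mul_conj, walsh_eq, map_sum, Finset.sum_mul_sum]
        refine Finset.sum_congr rfl fun x _ => Finset.sum_congr rfl fun x' _ => ?_
        rw [map_mul, psi_conj, neg_neg, ← dot_sub, sub_eq_add_neg (dot a x'),
          AddChar.map_add_eq_mul]
        ring
    _ = ∑ x, ∑ x', (c x * (starRingEnd ℂ) (c x')) *
          ∑ a : Fin n → ZMod p, psi p (dot a (x' - x)) := by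
        rw [Finset.sum_comm]
        refine Finset.sum_congr rfl fun x _ => ?_
        rw [Finset.sum_comm]
        exact Finset.sum_congr rfl fun x' _ => (Finset.mul_sum _ _ _).symm
    _ = ∑ x : Fin n → ZMod p, (p : ℂ) ^ n := by
        refine Finset.sum_congr rfl fun x _ => ?_
        rw [Finset.sum_eq_single x]
        · rw [sum_psi_dot, if_pos (sub_self x), hcc, one_mul]
        · intro x' _ hx'
          rw [sum_psi_dot, if_neg (sub_ne_zero_of_ne hx'), mul_zero]
        · intro h; exact absurd (Finset.mem_univ x) h
    _ = (p : ℂ) ^ (2 * n) := by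
        rw [Finset.sum_const, Finset.card_univ, Fintype.card_fun, ZMod.card,
          Fintype.card_fin, nsmul_eq_mul, two_mul, pow_add]
        push_cast
        ring

end aux

theorem stmt8 (p n k s : ℕ) [Fact (Nat.Prime p)] (hn : 1 ≤ n) (hk : 1 ≤ k) (hs : s ≤ n)
    (hps : p = 2 → Even (n + s))
    (f : (Fin s → ZMod p) → (Fin n → ZMod p) → ZMod (p ^ k))
    (hf : ∀ y a, ‖walsh p n k (f y) a‖ = (p : ℝ) ^ (((n : ℝ) + (s : ℝ)) / 2) ∨
      walsh p n k (f y) a = 0)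
    (hdisj : ∀ y y', y ≠ y' → ∀ a, walsh p n k (f y) a = 0 ∨ walsh p n k (f y') a = 0) :
    (∀ y, {a : Fin n → ZMod p | walsh p n k (f y) a ≠ 0}.ncard = p ^ (n - s)) ∧
    (∀ y y', y ≠ y' →
      Disjoint {a : Fin n → ZMod p | walsh p n k (f y) a ≠ 0}
        {a : Fin n → ZMod p | walsh p n k (f y') a ≠ 0}) ∧
    (⋃ y : Fin s → ZMod p, {a : Fin n → ZMod p | walsh p n k (f y) a ≠ 0}) = Set.univ := by
  have hp : (0 : ℝ) < p := by exact_mod_cast (Fact.out (p := p.Prime)).pos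
  classical
  set T : (Fin s → ZMod p) → Finset (Fin n → ZMod p) :=
    fun y => Finset.univ.filter (fun a => walsh p n k (f y) a ≠ 0) with hT
  have hsetT : ∀ y, {a : Fin n → ZMod p | walsh p n k (f y) a ≠ 0} = ↑(T y) := by
    intro y; ext a; simp [hT]
  -- card of each support
  have hcard : ∀ y, (T y).card = p ^ (n - s) := by
    intro y
    -- real Parseval
    have hP : ∑ a : Fin n → ZMod p, Complex.normSq (walsh p n k (f y) a) = (p : ℝ) ^ (2 * n) := by
      have := parseval p n k hk (f y)
      have h2 : ((∑ a : Fin n → ZMod p, Complex.normSq (walsh p n k (f y) a) : ℝ) : ℂ)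
          = ((p : ℝ) ^ (2 * n) : ℝ) := by push_cast; exact this
      exact_mod_cast h2
    have hval : ∀ a ∈ T y, Complex.normSq (walsh p n k (f y) a) = (p : ℝ) ^ (n + s) := by
      intro a ha
      rw [hT, Finset.mem_filter] at ha
      rcases hf y a with h | h
      · rw [← Complex.sq_norm, h, ← Real.rpow_natCast ((p:ℝ) ^ (((n:ℝ)+s)/2)) 2,
          ← Real.rpow_natCast (p:ℝ) (n+s), ← Real.rpow_mul hp.le]
        norm_num
      · exact absurd h ha.2
    have hsum : ∑ a : Fin n → ZMod p, Complex.normSq (walsh p n k (f y) a)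
        = (T y).card * (p : ℝ) ^ (n + s) := by
      rw [← Finset.sum_filter_ne_zero Finset.univ,
        show (Finset.univ.filter fun a => Complex.normSq (walsh p n k (f y) a) ≠ 0) = T y by
          ext a; simp [hT, Complex.normSq_eq_zero],
        Finset.sum_congr rfl hval, Finset.sum_const, nsmul_eq_mul]
    have key : ((T y).card : ℝ) * (p : ℝ) ^ (n + s) = (p : ℝ) ^ (n - s) * (p : ℝ) ^ (n + s) := by
      rw [← hsum, hP, ← pow_add]
      congr 1
      omega
    have := mul_right_cancel₀ (pow_ne_zero _ hp.ne') key
    exact_mod_cast this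
  -- disjointness (Finset level)
  have hTdisj : ∀ y y', y ≠ y' → Disjoint (T y) (T y') := by
    intro y y' hyy'
    rw [Finset.disjoint_left]
    intro a ha ha'
    rw [hT, Finset.mem_filter] at ha ha'
    rcases hdisj y y' hyy' a with h | h
    · exact ha.2 h
    · exact ha'.2 h
  refine ⟨?_, ?_, ?_⟩
  · intro y
    rw [hsetT, Set.ncard_coe_finset, hcard]
  · intro y y' h
    rw [hsetT, hsetT]
    exact_mod_cast Finset.disjoint_coe.mpr (hTdisj y y' h)
  · have hb : (Finset.univ.biUnion T).card = Fintype.card (Fin n → ZMod p) := by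
      rw [Finset.card_biUnion (fun y _ y' _ h => hTdisj y y' h)]
      simp only [hcard, Finset.sum_const, Finset.card_univ, Fintype.card_fun, ZMod.card,
        Fintype.card_fin, smul_eq_mul]
      rw [← pow_add]
      congr 1
      omega
    have huniv : Finset.univ.biUnion T = Finset.univ :=
      Finset.eq_univ_of_card _ hb
    ext a
    simp only [Set.mem_iUnion, Set.mem_setOf_eq, Set.mem_univ, iff_true]
    have : a ∈ Finset.univ.biUnion T := huniv ▸ Finset.mem_univ a
    rw [Finset.mem_biUnion] at this
    obtain ⟨y, _, hy⟩ := this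
    rw [hT, Finset.mem_filter] at hy
    exact ⟨y, hy.2⟩
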